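/- Let d ≥ 2 and n ≥ 1, and for each j ∈ {1,…,d} let k^j : X^j × X^j → ℝ be a symmetric positive semidefinite kernel with 0 ≤ k^j(x,y) ≤ K^j for all x,y ∈ X^j. Then for every d-tuple π of permutations of {1,…,n} and all datasets X, X̃ of size n with d_ham(X, X̃) ≤ 1, one has |dHSIC^(X^π) − dHSIC^(X̃^π)| ≤ (2d/n)·(Π_{j=1}^d K^j)^{1/2}. -/

import Mathlib

open Finset

noncomputable section

/-- A symmetric positive semidefinite kernel. -/
def IsSymmPSDKernel {Y : Type*} (k : Y → Y → ℝ) : Prop :=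
  (∀ x y, k x y = k y x) ∧
  ∀ (m : ℕ) (x : Fin m → Y) (c : Fin m → ℝ),
    0 ≤ ∑ a : Fin m, ∑ b : Fin m, c a * c b * k (x a) (x b)

/-- Squared empirical dHSIC (V-statistic) of a dataset of size `n`. -/
def Vstat {d n : ℕ} {X : Fin d → Type*} (k : ∀ j, X j → X j → ℝ)
    (D : Fin n → ∀ j, X j) : ℝ :=
  ((n : ℝ) ^ 2)⁻¹ * ∑ i₁ : Fin n, ∑ i₂ : Fin n, ∏ j, k j (D i₁ j) (D i₂ j)
    + ((n : ℝ) ^ (2 * d))⁻¹ *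
        ∑ a : Fin d → Fin n, ∑ b : Fin d → Fin n, ∏ j, k j (D (a j) j) (D (b j) j)
    - 2 * ((n : ℝ) ^ (d + 1))⁻¹ *
        ∑ i₁ : Fin n, ∑ c : Fin d → Fin n, ∏ j, k j (D i₁ j) (D (c j) j)

/-- Empirical dHSIC. -/
def dHSICemp {d n : ℕ} {X : Fin d → Type*} (k : ∀ j, X j → X j → ℝ)
    (D : Fin n → ∀ j, X j) : ℝ :=
  Real.sqrt (Vstat k D)

/-- Dataset permuted by a `d`-tuple of permutations. -/
def permuteD {d n : ℕ} {X : Fin d → Type*} (π : Fin d → Equiv.Perm (Fin n))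
    (D : Fin n → ∀ j, X j) : Fin n → ∀ j, X j :=
  fun i j => D (π j i) j

/-- Hamming distance between two datasets. -/
def hamD {d n : ℕ} {X : Fin d → Type*} (D D' : Fin n → ∀ j, X j) : ℕ :=
  Set.ncard {i | D i ≠ D' i}

/-- generic double sum bilinear form -/
def Bf {ι : Type*} [Fintype ι] (κ : ι → ι → ℝ) (f g : ι → ℝ) : ℝ :=
  ∑ a, ∑ b, f a * g b * κ a b

lemma gram_nonneg {Y : Type*} {k : Y → Y → ℝ} (hk : IsSymmPSDKernel k)
    {ι : Type*} [Fintype ι] (p : ι → Y) (c : ι → ℝ) :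
    0 ≤ ∑ a : ι, ∑ b : ι, c a * c b * k (p a) (p b) := by
  classical
  let e := Fintype.equivFin ι
  have h := hk.2 (Fintype.card ι) (p ∘ e.symm) (c ∘ e.symm)
  have h2 : ∑ a : Fin (Fintype.card ι), ∑ b : Fin (Fintype.card ι),
      (c ∘ e.symm) a * (c ∘ e.symm) b * k ((p ∘ e.symm) a) ((p ∘ e.symm) b)
      = ∑ a : ι, ∑ b : ι, c a * c b * k (p a) (p b) := by
    rw [← Equiv.sum_comp e.symm (fun a => ∑ b : ι, c a * c b * k (p a) (p b))]
    refine Finset.sum_congr rfl fun a _ => ?_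
    rw [← Equiv.sum_comp e.symm (fun b => c (e.symm a) * c b * k (p (e.symm a)) (p b))]
    rfl
  linarith [h2 ▸ h]

lemma gram_factor {Y : Type*} {k : Y → Y → ℝ} (hk : IsSymmPSDKernel k)
    {ι : Type*} [Fintype ι] [DecidableEq ι] (p : ι → Y) :
    ∃ A : ι → ι → ℝ, ∀ a b, k (p a) (p b) = ∑ r, A r a * A r b := by
  have hM : (Matrix.of (fun a b => k (p a) (p b))).PosSemidef := by
    refine Matrix.PosSemidef.of_dotProduct_mulVec_nonneg ?_ ?_
    · ext a b
      simp [Matrix.conjTranspose_apply, hk.1 (p a) (p b)]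
    · intro x
      have := gram_nonneg hk p x
      simpa [dotProduct, Matrix.mulVec, Finset.mul_sum, mul_comm, mul_assoc,
        mul_left_comm] using this
  obtain ⟨B, hB⟩ : ∃ B : Matrix ι ι ℝ, Matrix.of (fun a b => k (p a) (p b)) = B.conjTranspose * B := by
    open scoped MatrixOrder in
    obtain ⟨B, hB⟩ := CStarAlgebra.nonneg_iff_eq_star_mul_self.mp hM.nonneg
    exact ⟨B, hB⟩
  refine ⟨fun r a => B r a, fun a b => ?_⟩
  have h : k (p a) (p b) = (B.conjTranspose * B) a b := by
    rw [← hB]; rfl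
  rw [h, Matrix.mul_apply]
  refine Finset.sum_congr rfl fun r _ => ?_
  simp [Matrix.conjTranspose_apply]

lemma prod_gram_nonneg {d : ℕ} {X : Fin d → Type*} {k : ∀ j, X j → X j → ℝ}
    (hk : ∀ j, IsSymmPSDKernel (k j)) {ι : Type*} [Fintype ι] [DecidableEq ι]
    (p : ι → ∀ j, X j) (c : ι → ℝ) :
    0 ≤ ∑ a, ∑ b, c a * c b * ∏ j, k j (p a j) (p b j) := by
  choose A hA using fun j => gram_factor (hk j) (fun a => p a j)
  have key : ∀ a b : ι, (∏ j, k j (p a j) (p b j))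
      = ∑ ρ : Fin d → ι, (∏ j, A j (ρ j) a) * (∏ j, A j (ρ j) b) := by
    intro a b
    have h1 : (∏ j, k j (p a j) (p b j)) = ∏ j, ∑ r, A j r a * A j r b :=
      Finset.prod_congr rfl fun j _ => hA j a b
    rw [h1, Finset.prod_univ_sum]
    exact Finset.sum_congr rfl fun ρ _ => Finset.prod_mul_distrib
  calc (0:ℝ) ≤ ∑ ρ : Fin d → ι, (∑ a, c a * ∏ j, A j (ρ j) a) ^ 2 :=
        Finset.sum_nonneg fun ρ _ => sq_nonneg _
    _ = ∑ a, ∑ b, c a * c b * ∏ j, k j (p a j) (p b j) := by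
        simp_rw [key, Finset.mul_sum, sq, Finset.sum_mul_sum]
        rw [Finset.sum_comm]
        refine Finset.sum_congr rfl fun a _ => ?_
        rw [Finset.sum_comm]
        refine Finset.sum_congr rfl fun b _ => Finset.sum_congr rfl fun ρ _ => by ring

section Quad

variable {ι : Type*} [Fintype ι] (κ : ι → ι → ℝ)

lemma Bf_comm (hsym : ∀ a b, κ a b = κ b a) (f g : ι → ℝ) : Bf κ f g = Bf κ g f := by
  rw [Bf, Finset.sum_comm]
  exact Finset.sum_congr rfl fun a _ => Finset.sum_congr rfl fun b _ => by
    rw [hsym]; ring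

lemma Bf_add_left (f g h : ι → ℝ) : Bf κ (fun a => f a + g a) h = Bf κ f h + Bf κ g h := by
  simp [Bf, add_mul, Finset.sum_add_distrib]

lemma Bf_add_right (f g h : ι → ℝ) : Bf κ f (fun a => g a + h a) = Bf κ f g + Bf κ f h := by
  simp [Bf, mul_add, add_mul, Finset.sum_add_distrib]

lemma Bf_sub_left (f g h : ι → ℝ) : Bf κ (fun a => f a - g a) h = Bf κ f h - Bf κ g h := by
  simp [Bf, sub_mul, Finset.sum_sub_distrib]

lemma Bf_sub_right (f g h : ι → ℝ) : Bf κ f (fun a => g a - h a) = Bf κ f g - Bf κ f h := by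
  simp [Bf, mul_sub, sub_mul, Finset.sum_sub_distrib]

lemma Bf_smul_left (t : ℝ) (f g : ι → ℝ) : Bf κ (fun a => t * f a) g = t * Bf κ f g := by
  simp [Bf, Finset.mul_sum, mul_assoc]

lemma Bf_smul_right (t : ℝ) (f g : ι → ℝ) : Bf κ f (fun a => t * g a) = t * Bf κ f g := by
  simp only [Bf, Finset.mul_sum]
  exact Finset.sum_congr rfl fun a _ => Finset.sum_congr rfl fun b _ => by ring

lemma Bf_cs (hsym : ∀ a b, κ a b = κ b a) (hpos : ∀ c : ι → ℝ, 0 ≤ Bf κ c c)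
    (f g : ι → ℝ) : Bf κ f g ≤ Real.sqrt (Bf κ f f) * Real.sqrt (Bf κ g g) := by
  have hquad : ∀ t : ℝ, 0 ≤ Bf κ f f * (t * t) + (2 * Bf κ f g) * t + Bf κ g g := by
    intro t
    have h := hpos (fun a => t * f a + g a)
    have hexp : Bf κ (fun a => t * f a + g a) (fun a => t * f a + g a)
        = Bf κ f f * (t * t) + (2 * Bf κ f g) * t + Bf κ g g := by
      rw [Bf_add_left, Bf_add_right, Bf_add_right, Bf_smul_left, Bf_smul_left,
        Bf_smul_right, Bf_smul_right, Bf_comm κ hsym g f]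
      ring
    linarith [hexp ▸ h]
  have hd := discrim_le_zero hquad
  rw [discrim] at hd
  have hsq : (Bf κ f g) ^ 2 ≤ Bf κ f f * Bf κ g g := by nlinarith
  calc Bf κ f g ≤ |Bf κ f g| := le_abs_self _
    _ = Real.sqrt ((Bf κ f g) ^ 2) := (Real.sqrt_sq_eq_abs _).symm
    _ ≤ Real.sqrt (Bf κ f f * Bf κ g g) := Real.sqrt_le_sqrt hsq
    _ = Real.sqrt (Bf κ f f) * Real.sqrt (Bf κ g g) := Real.sqrt_mul (hpos f) _

lemma sqrt_Bf_sub (hsym : ∀ a b, κ a b = κ b a) (hpos : ∀ c : ι → ℝ, 0 ≤ Bf κ c c)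
    (u v : ι → ℝ) :
    |Real.sqrt (Bf κ u u) - Real.sqrt (Bf κ v v)|
      ≤ Real.sqrt (Bf κ (fun a => u a - v a) (fun a => u a - v a)) := by
  have key : ∀ x y : ι → ℝ, Real.sqrt (Bf κ x x) ≤ Real.sqrt (Bf κ y y)
      + Real.sqrt (Bf κ (fun a => x a - y a) (fun a => x a - y a)) := by
    intro x y
    set w : ι → ℝ := fun a => x a - y a with hw
    have hx : Bf κ x x = Bf κ y y + 2 * Bf κ y w + Bf κ w w := by
      have e1 : x = fun a => y a + w a := by funext a; simp [hw]
      rw [e1, Bf_add_left, Bf_add_right, Bf_add_right, Bf_comm κ hsym w y]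
      ring
    have hcs := Bf_cs κ hsym hpos y w
    have hle : Bf κ x x ≤ (Real.sqrt (Bf κ y y) + Real.sqrt (Bf κ w w)) ^ 2 := by
      have h1 : Real.sqrt (Bf κ y y) ^ 2 = Bf κ y y := Real.sq_sqrt (hpos y)
      have h2 : Real.sqrt (Bf κ w w) ^ 2 = Bf κ w w := Real.sq_sqrt (hpos w)
      nlinarith
    calc Real.sqrt (Bf κ x x)
        ≤ Real.sqrt ((Real.sqrt (Bf κ y y) + Real.sqrt (Bf κ w w)) ^ 2) :=
          Real.sqrt_le_sqrt hle
      _ = Real.sqrt (Bf κ y y) + Real.sqrt (Bf κ w w) := by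
          rw [Real.sqrt_sq (by positivity)]
  have h1 := key u v
  have h2 := key v u
  have heq : Bf κ (fun a => v a - u a) (fun a => v a - u a)
      = Bf κ (fun a => u a - v a) (fun a => u a - v a) := by
    rw [Bf_sub_left, Bf_sub_left, Bf_sub_right, Bf_sub_right, Bf_sub_right,
      Bf_sub_right, Bf_comm κ hsym v u]
    ring
  rw [abs_sub_le_iff]
  constructor <;> linarith [heq ▸ h2]

end Quad

section VstatRep

variable {d n : ℕ} {X : Fin d → Type*}

/-- coefficient vector for the dHSIC element -/
def cwD (d n : ℕ) : (Fin d → Fin n) → ℝ :=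
  fun a => (∑ i : Fin n, if a = fun _ => i then (n:ℝ)⁻¹ else 0) - ((n:ℝ)^d)⁻¹

lemma sum_cw_part (g : (Fin d → Fin n) → ℝ) :
    ∑ a : Fin d → Fin n, (∑ i : Fin n, if a = fun _ => i then (n:ℝ)⁻¹ else 0) * g a
      = (n:ℝ)⁻¹ * ∑ i : Fin n, g (fun _ => i) := by
  classical
  simp_rw [Finset.sum_mul, ite_mul, zero_mul]
  rw [Finset.sum_comm, Finset.mul_sum]
  refine Finset.sum_congr rfl fun i _ => ?_
  rw [Finset.sum_ite_eq' Finset.univ (fun _ => i) (fun a => (n:ℝ)⁻¹ * g a)]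
  simp

lemma Vstat_eq (k : ∀ j, X j → X j → ℝ) (hk : ∀ j, ∀ x y, k j x y = k j y x)
    (D : Fin n → ∀ j, X j) :
    Vstat k D = Bf (fun a b : Fin d → Fin n => ∏ j, k j (D (a j) j) (D (b j) j))
      (cwD d n) (cwD d n) := by
  classical
  set κ : (Fin d → Fin n) → (Fin d → Fin n) → ℝ :=
    fun a b => ∏ j, k j (D (a j) j) (D (b j) j) with hκ
  have hsymκ : ∀ a b, κ a b = κ b a := fun a b =>
    Finset.prod_congr rfl fun j _ => hk j _ _
  set u : (Fin d → Fin n) → ℝ :=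
    fun a => (∑ i : Fin n, if a = fun _ => i then (n:ℝ)⁻¹ else 0) with hu
  set v : (Fin d → Fin n) → ℝ := fun _ => ((n:ℝ)^d)⁻¹ with hv
  have hc : cwD d n = fun a => u a - v a := rfl
  have hBstep : ∀ f g : (Fin d → Fin n) → ℝ,
      Bf κ f g = ∑ a, f a * (∑ b, g b * κ a b) := by
    intro f g
    simp only [Bf, Finset.mul_sum]
    exact Finset.sum_congr rfl fun a _ => Finset.sum_congr rfl fun b _ => by ring
  have huu : Bf κ u u = (n:ℝ)⁻¹ * ∑ i₁ : Fin n, ((n:ℝ)⁻¹ *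
      ∑ i₂ : Fin n, ∏ j, k j (D i₁ j) (D i₂ j)) := by
    rw [hBstep, sum_cw_part]
    refine congrArg _ (Finset.sum_congr rfl fun i₁ _ => ?_)
    rw [sum_cw_part (fun b => κ (fun _ => i₁) b)]
  have hvv : Bf κ v v = ((n:ℝ)^d)⁻¹ * (((n:ℝ)^d)⁻¹ *
      ∑ a : Fin d → Fin n, ∑ b : Fin d → Fin n, ∏ j, k j (D (a j) j) (D (b j) j)) := by
    simp only [Bf, hv, Finset.mul_sum]
    refine Finset.sum_congr rfl fun a _ => Finset.sum_congr rfl fun b _ => ?_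
    simp only [hκ]
    ring
  have huv : Bf κ u v = (n:ℝ)⁻¹ * ∑ i₁ : Fin n, (((n:ℝ)^d)⁻¹ *
      ∑ b : Fin d → Fin n, ∏ j, k j (D i₁ j) (D (b j) j)) := by
    rw [hBstep, sum_cw_part]
    refine congrArg _ (Finset.sum_congr rfl fun i₁ _ => ?_)
    rw [← Finset.mul_sum]
  have hexp : Bf κ (cwD d n) (cwD d n) = Bf κ u u + Bf κ v v - 2 * Bf κ u v := by
    rw [hc, Bf_sub_left, Bf_sub_right, Bf_sub_right, Bf_comm κ hsymκ v u]
    ring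
  rw [hexp, huu, hvv, huv, Vstat]
  have e1 : ((n:ℝ)^2)⁻¹ = (n:ℝ)⁻¹ * (n:ℝ)⁻¹ := by rw [sq, mul_inv]
  have e2 : ((n:ℝ)^(2*d))⁻¹ = ((n:ℝ)^d)⁻¹ * ((n:ℝ)^d)⁻¹ := by
    rw [two_mul, pow_add, mul_inv]
  have e3 : ((n:ℝ)^(d+1))⁻¹ = (n:ℝ)⁻¹ * ((n:ℝ)^d)⁻¹ := by
    rw [pow_succ, mul_inv, mul_comm]
  rw [e1, e2, e3, ← Finset.mul_sum, ← Finset.mul_sum]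
  ring

end VstatRep

section Step

lemma step_bound {d n : ℕ} (hn : 1 ≤ n) {X : Fin d → Type*}
    (k : ∀ j, X j → X j → ℝ) (K : Fin d → ℝ)
    (hpsd : ∀ j, IsSymmPSDKernel (k j))
    (hbdd : ∀ j, ∀ x y : X j, 0 ≤ k j x y ∧ k j x y ≤ K j)
    (hK : ∀ j, 0 ≤ K j)
    (j0 : Fin d) (i0 : Fin n) (Z Z' : Fin n → ∀ j, X j)
    (h1 : ∀ i j, j ≠ j0 → Z i j = Z' i j)
    (h2 : ∀ i, i ≠ i0 → Z i j0 = Z' i j0) :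
    |dHSICemp k Z - dHSICemp k Z'| ≤ 2 / (n:ℝ) * Real.sqrt (∏ j, K j) := by
  classical
  set P2 : (Fin d → Fin n) × Bool → ∀ j, X j :=
    fun ae j => cond ae.2 (Z (ae.1 j) j) (Z' (ae.1 j) j) with hP2
  set κ2 : (Fin d → Fin n) × Bool → (Fin d → Fin n) × Bool → ℝ :=
    fun x y => ∏ j, k j (P2 x j) (P2 y j) with hκ2
  have hsym2 : ∀ x y, κ2 x y = κ2 y x := fun x y =>
    Finset.prod_congr rfl fun j _ => (hpsd j).1 _ _
  have hpos2 : ∀ c : (Fin d → Fin n) × Bool → ℝ, 0 ≤ Bf κ2 c c := fun c => by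
    rw [Bf]; exact prod_gram_nonneg hpsd P2 c
  set c0 : (Fin d → Fin n) → ℝ := cwD d n with hc0
  set e1 : (Fin d → Fin n) × Bool → ℝ := fun ae => cond ae.2 (c0 ae.1) 0 with he1
  set e2 : (Fin d → Fin n) × Bool → ℝ := fun ae => cond ae.2 0 (c0 ae.1) with he2
  have hQ1 : Bf κ2 e1 e1 = Vstat k Z := by
    rw [Vstat_eq k (fun j => (hpsd j).1) Z]
    simp only [Bf, Fintype.sum_prod_type, Fintype.sum_bool, he1, hκ2, hP2, Bool.cond_true,
      Bool.cond_false, zero_mul, mul_zero, Finset.sum_const_zero, add_zero, zero_add, hc0]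
  have hQ2 : Bf κ2 e2 e2 = Vstat k Z' := by
    rw [Vstat_eq k (fun j => (hpsd j).1) Z']
    simp only [Bf, Fintype.sum_prod_type, Fintype.sum_bool, he2, hκ2, hP2, Bool.cond_true,
      Bool.cond_false, zero_mul, mul_zero, Finset.sum_const_zero, add_zero, zero_add, hc0]
  set w : (Fin d → Fin n) × Bool → ℝ := fun x => e1 x - e2 x with hw
  have htri : |dHSICemp k Z - dHSICemp k Z'| ≤ Real.sqrt (Bf κ2 w w) := by
    rw [dHSICemp, dHSICemp, ← hQ1, ← hQ2]
    exact sqrt_Bf_sub κ2 hsym2 hpos2 e1 e2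
  set R : (Fin d → Fin n) → (Fin d → Fin n) → ℝ :=
    fun a b => ∏ j ∈ Finset.univ.erase j0, k j (Z (a j) j) (Z (b j) j) with hR
  set Δ : ℝ := k j0 (Z i0 j0) (Z i0 j0) + k j0 (Z' i0 j0) (Z' i0 j0)
      - 2 * k j0 (Z i0 j0) (Z' i0 j0) with hΔ
  set T : ℝ := ∑ a : Fin d → Fin n, ∑ b : Fin d → Fin n,
      (if a j0 = i0 ∧ b j0 = i0 then c0 a * c0 b * R a b else 0) with hT
  -- decomposition of the four kernels
  have hk4 : ∀ (a b : Fin d → Fin n) (e e' : Bool),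
      κ2 (a, e) (b, e') = k j0 (cond e (Z (a j0) j0) (Z' (a j0) j0))
        (cond e' (Z (b j0) j0) (Z' (b j0) j0)) * R a b := by
    intro a b e e'
    show (∏ j, k j (P2 (a,e) j) (P2 (b,e') j)) = _
    rw [← Finset.mul_prod_erase Finset.univ _ (Finset.mem_univ j0)]
    have : ∀ j ∈ Finset.univ.erase j0,
        k j (P2 (a, e) j) (P2 (b, e') j) = k j (Z (a j) j) (Z (b j) j) := by
      intro j hj
      have hjne := Finset.ne_of_mem_erase hj
      cases e <;> cases e' <;>
        simp only [hP2, Bool.cond_true, Bool.cond_false, ← h1 (a j) j hjne,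
          ← h1 (b j) j hjne]
    rw [Finset.prod_congr rfl this]
  have hQw : Bf κ2 w w = Δ * T := by
    have hmain : Bf κ2 w w
        = ∑ a : Fin d → Fin n, ∑ b : Fin d → Fin n,
          (Δ * if a j0 = i0 ∧ b j0 = i0 then c0 a * c0 b * R a b else 0) := by
      rw [Bf]
      simp only [Fintype.sum_prod_type, Fintype.sum_bool]
      refine Finset.sum_congr rfl fun a _ => ?_
      rw [← Finset.sum_add_distrib]
      refine Finset.sum_congr rfl fun b _ => ?_
      simp only [hw, he1, he2, Bool.cond_true, Bool.cond_false, sub_zero, zero_sub]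
      rw [hk4 a b true true, hk4 a b true false, hk4 a b false true, hk4 a b false false]
      simp only [Bool.cond_true, Bool.cond_false]
      by_cases ha : a j0 = i0
      · by_cases hb : b j0 = i0
        · rw [if_pos ⟨ha, hb⟩, ha, hb, hΔ, (hpsd j0).1 (Z' i0 j0) (Z i0 j0)]
          ring
        · rw [if_neg (fun h => hb h.2), ← h2 (b j0) hb]
          ring
      · rw [if_neg (fun h => ha h.1), ← h2 (a j0) ha]
        ring
    rw [hmain, hT]
    simp only [Finset.mul_sum]
  -- bounds
  have hΔ0 : 0 ≤ Δ := by
    have h := (hpsd j0).2 2 ![Z i0 j0, Z' i0 j0] ![1, -1]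
    simp only [Fin.sum_univ_two, Matrix.cons_val_zero, Matrix.cons_val_one,
      Matrix.head_cons] at h
    have hs := (hpsd j0).1 (Z' i0 j0) (Z i0 j0)
    rw [hΔ]
    linarith
  have hΔ2 : Δ ≤ 2 * K j0 := by
    have b1 := hbdd j0 (Z i0 j0) (Z i0 j0)
    have b2 := hbdd j0 (Z' i0 j0) (Z' i0 j0)
    have b3 := hbdd j0 (Z i0 j0) (Z' i0 j0)
    rw [hΔ]; linarith [b1.2, b2.2, b3.1]
  have hRnn : ∀ a b, 0 ≤ R a b := fun a b =>
    Finset.prod_nonneg fun j _ => (hbdd j _ _).1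
  have hRle : ∀ a b, R a b ≤ ∏ j ∈ Finset.univ.erase j0, K j := fun a b =>
    Finset.prod_le_prod (fun j _ => (hbdd j _ _).1) (fun j _ => (hbdd j _ _).2)
  have hKr : (0:ℝ) ≤ ∏ j ∈ Finset.univ.erase j0, K j :=
    Finset.prod_nonneg fun j _ => hK j
  have hTle : T ≤ 2 * ((n:ℝ)⁻¹)^2 * ∏ j ∈ Finset.univ.erase j0, K j := by
    set Kr : ℝ := ∏ j ∈ Finset.univ.erase j0, K j with hKrdef
    set u' : (Fin d → Fin n) → ℝ :=
      fun a => if a = (fun _ => i0) then (n:ℝ)⁻¹ else 0 with hu'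
    set v' : (Fin d → Fin n) → ℝ :=
      fun a => if a j0 = i0 then ((n:ℝ)^d)⁻¹ else 0 with hv'
    have hm : ∀ a : Fin d → Fin n,
        (if a j0 = i0 then c0 a else 0) = u' a - v' a := by
      intro a
      by_cases ha : a j0 = i0
      · rw [if_pos ha, hu', hv']
        simp only [if_pos ha]
        rw [hc0, cwD]
        by_cases hac : a = (fun _ => i0)
        · rw [if_pos hac]
          have hsum : (∑ i : Fin n, if a = (fun _ => i) then (n:ℝ)⁻¹ else 0)
              = (n:ℝ)⁻¹ := by
            subst hac
            have hite : ∀ i : Fin n,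
                (if (fun _ : Fin d => i0) = (fun _ : Fin d => i) then (n:ℝ)⁻¹ else 0)
                  = if i = i0 then (n:ℝ)⁻¹ else 0 := by
              intro i
              refine if_congr ⟨fun h => (congrFun h j0).symm, fun h => funext fun _ => h.symm⟩ rfl rfl
            rw [Finset.sum_congr rfl fun i _ => hite i]
            simp
          rw [hsum]
        · rw [if_neg hac]
          have hsum : (∑ i : Fin n, if a = (fun _ : Fin d => i) then (n:ℝ)⁻¹ else 0)
              = 0 := by
            refine Finset.sum_eq_zero fun i _ => ?_
            rw [if_neg]
            intro h
            apply hac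
            have : i = i0 := by rw [← ha, h]
            rw [← this]; exact h
          rw [hsum]
      · rw [if_neg ha, hu', hv']
        have hac : a ≠ (fun _ => i0) := fun h => ha (by rw [h])
        simp only [if_neg ha, if_neg hac]
        ring
    have hmask : ∀ a b : Fin d → Fin n,
        (if a j0 = i0 ∧ b j0 = i0 then c0 a * c0 b * R a b else 0)
          = (u' a - v' a) * (u' b - v' b) * R a b := by
      intro a b
      rw [← hm a, ← hm b]
      by_cases ha : a j0 = i0
      · by_cases hb : b j0 = i0
        · rw [if_pos ⟨ha, hb⟩, if_pos ha, if_pos hb]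
        · rw [if_neg (fun h => hb h.2), if_neg hb]; ring
      · rw [if_neg (fun h => ha h.1), if_neg ha]; ring
    have hTm : T = (∑ a, ∑ b, u' a * u' b * R a b) + (∑ a, ∑ b, v' a * v' b * R a b)
        - (∑ a, ∑ b, u' a * v' b * R a b) - (∑ a, ∑ b, v' a * u' b * R a b) := by
      rw [hT]
      rw [Finset.sum_congr rfl fun a _ => Finset.sum_congr rfl fun b _ => hmask a b]
      simp only [sub_mul, mul_sub, Finset.sum_sub_distrib]
      ring
    have huu : (∑ a, ∑ b, u' a * u' b * R a b)
        = (n:ℝ)⁻¹ * ((n:ℝ)⁻¹ * R (fun _ => i0) (fun _ => i0)) := by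
      simp only [hu', ite_mul, zero_mul, mul_ite, mul_zero, Finset.sum_ite_eq',
        Finset.mem_univ, if_true, Finset.mul_sum]
      ring
    have hnne : (n:ℝ) ≠ 0 := Nat.cast_ne_zero.mpr (by omega)
    have hninv : (0:ℝ) ≤ (n:ℝ)⁻¹ := by positivity
    have hchi : (∑ a : Fin d → Fin n, (if a j0 = i0 then (1:ℝ) else 0))
        = ((n:ℝ))^(d-1) := by
      rw [← Equiv.sum_comp (Equiv.funSplitAt j0 (Fin n)).symm
        (fun a => if a j0 = i0 then (1:ℝ) else 0)]
      have hval : ∀ x : Fin n × ({ j : Fin d // j ≠ j0 } → Fin n),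
          ((Equiv.funSplitAt j0 (Fin n)).symm x) j0 = x.1 := by
        intro x
        rw [Equiv.funSplitAt_symm_apply, dif_pos rfl]
      rw [Fintype.sum_prod_type]
      simp only [hval]
      rw [Finset.sum_congr rfl (fun x _ => Finset.sum_const _)]
      simp only [nsmul_eq_mul]
      have hcard : (Fintype.card ({ j : Fin d // j ≠ j0 } → Fin n)) = n^(d-1) := by
        rw [Fintype.card_fun]
        congr 1
        · exact Fintype.card_fin n
        · rw [Fintype.card_subtype_compl, Fintype.card_subtype_eq, Fintype.card_fin]
      simp only [Finset.card_univ, hcard, ← Finset.mul_sum]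
      rw [Finset.sum_ite_eq' Finset.univ i0 (fun _ => (1:ℝ))]
      simp only [Finset.mem_univ, if_true, mul_one]
      push_cast
      ring
    have hv'nn : ∀ x, 0 ≤ v' x := fun x => by
      simp only [hv']; split <;> positivity
    have hu'nn : ∀ x, 0 ≤ u' x := fun x => by
      simp only [hu']; split <;> positivity
    have hvsum : (∑ a, v' a) = (n:ℝ)⁻¹ := by
      have hva : ∀ a : Fin d → Fin n, v' a
          = ((n:ℝ)^d)⁻¹ * (if a j0 = i0 then (1:ℝ) else 0) := by
        intro a; simp only [hv']; split <;> simp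
      rw [Finset.sum_congr rfl fun a _ => hva a, ← Finset.mul_sum, hchi]
      have hd1 : d - 1 + 1 = d := Nat.succ_pred_eq_of_pos j0.pos
      rw [← hd1, pow_succ]
      field_simp
      rw [Nat.add_sub_cancel]
    have hvv_le : (∑ a, ∑ b, v' a * v' b * R a b) ≤ (n:ℝ)⁻¹ * ((n:ℝ)⁻¹ * Kr) := by
      calc (∑ a, ∑ b, v' a * v' b * R a b) ≤ ∑ a, ∑ b, v' a * v' b * Kr := by
            refine Finset.sum_le_sum fun a _ => Finset.sum_le_sum fun b _ => ?_
            exact mul_le_mul_of_nonneg_left (hRle a b)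
              (mul_nonneg (hv'nn a) (hv'nn b))
        _ = ((∑ a, v' a) * (∑ a, v' a)) * Kr := by
            rw [Finset.sum_mul_sum, Finset.sum_mul]
            exact Finset.sum_congr rfl fun a _ => by rw [Finset.sum_mul]
        _ = (n:ℝ)⁻¹ * ((n:ℝ)⁻¹ * Kr) := by rw [hvsum]; ring
    have huv_nn : (0:ℝ) ≤ ∑ a, ∑ b, u' a * v' b * R a b :=
      Finset.sum_nonneg fun a _ => Finset.sum_nonneg fun b _ =>
        mul_nonneg (mul_nonneg (hu'nn a) (hv'nn b)) (hRnn a b)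
    have hvu_nn : (0:ℝ) ≤ ∑ a, ∑ b, v' a * u' b * R a b :=
      Finset.sum_nonneg fun a _ => Finset.sum_nonneg fun b _ =>
        mul_nonneg (mul_nonneg (hv'nn a) (hu'nn b)) (hRnn a b)
    have hRc : R (fun _ => i0) (fun _ => i0) ≤ Kr := hRle _ _
    have hsq : ((n:ℝ)⁻¹)^2 = (n:ℝ)⁻¹*(n:ℝ)⁻¹ := sq _
    have huu_le : (∑ a, ∑ b, u' a * u' b * R a b) ≤ (n:ℝ)⁻¹ * ((n:ℝ)⁻¹ * Kr) := by
      rw [huu]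
      exact mul_le_mul_of_nonneg_left
        (mul_le_mul_of_nonneg_left hRc hninv) hninv
    rw [hTm, hsq]
    nlinarith [huu_le, hvv_le, huv_nn, hvu_nn]
  have hProd : (K j0) * ∏ j ∈ Finset.univ.erase j0, K j = ∏ j, K j :=
    Finset.mul_prod_erase Finset.univ K (Finset.mem_univ j0)
  have hPK : 0 ≤ ∏ j, K j := Finset.prod_nonneg fun j _ => hK j
  have hQle : Bf κ2 w w ≤ 4 * ((n:ℝ)⁻¹)^2 * ∏ j, K j := by
    rcases le_or_gt 0 T with hT0 | hT0
    · calc Bf κ2 w w = Δ * T := hQw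
        _ ≤ (2 * K j0) * T := by apply mul_le_mul_of_nonneg_right hΔ2 hT0
        _ ≤ (2 * K j0) * (2 * ((n:ℝ)⁻¹)^2 * ∏ j ∈ Finset.univ.erase j0, K j) := by
            refine mul_le_mul_of_nonneg_left hTle (by linarith [hK j0])
        _ = 4 * ((n:ℝ)⁻¹)^2 * ((K j0) * ∏ j ∈ Finset.univ.erase j0, K j) := by ring
        _ = 4 * ((n:ℝ)⁻¹)^2 * ∏ j, K j := by rw [hProd]
    · have : Δ * T ≤ 0 := mul_nonpos_of_nonneg_of_nonpos hΔ0 hT0.le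
      calc Bf κ2 w w = Δ * T := hQw
        _ ≤ 0 := this
        _ ≤ _ := by positivity
  have hn0 : (0:ℝ) < (n:ℝ) := by exact_mod_cast hn.trans_lt' (by norm_num)
  calc |dHSICemp k Z - dHSICemp k Z'| ≤ Real.sqrt (Bf κ2 w w) := htri
    _ ≤ Real.sqrt ((2 / (n:ℝ) * Real.sqrt (∏ j, K j))^2) := by
        apply Real.sqrt_le_sqrt
        rw [mul_pow, Real.sq_sqrt hPK, div_pow]
        calc Bf κ2 w w ≤ 4 * ((n:ℝ)⁻¹)^2 * ∏ j, K j := hQle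
          _ = 2^2 / (n:ℝ)^2 * ∏ j, K j := by ring
    _ = 2 / (n:ℝ) * Real.sqrt (∏ j, K j) := Real.sqrt_sq (by positivity)

end Step

/-- sensitivity of the empirical permutation dHSIC. -/
theorem sensitivity_empirical_permutation_dHSIC
    {d n : ℕ} (hd : 2 ≤ d) (hn : 1 ≤ n)
    (X : Fin d → Type*) (k : ∀ j, X j → X j → ℝ) (K : Fin d → ℝ)
    (hpsd : ∀ j, IsSymmPSDKernel (k j))
    (hbdd : ∀ j, ∀ x y : X j, 0 ≤ k j x y ∧ k j x y ≤ K j)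
    (π : Fin d → Equiv.Perm (Fin n))
    (D D' : Fin n → ∀ j, X j) (hham : hamD D D' ≤ 1) :
    |dHSICemp k (permuteD π D) - dHSICemp k (permuteD π D')|
      ≤ 2 * (d : ℝ) / (n : ℝ) * Real.sqrt (∏ j, K j) := by
  classical
  have hn0 : 0 < n := hn
  have hK : ∀ j, 0 ≤ K j := fun j =>
    (hbdd j (D ⟨0, hn0⟩ j) (D ⟨0, hn0⟩ j)).1.trans (hbdd j _ _).2
  -- extract (at most one) differing index
  obtain ⟨i0, hD⟩ : ∃ i0 : Fin n, ∀ i, i ≠ i0 → D i = D' i := by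
    by_cases hall : ∀ i, D i = D' i
    · exact ⟨⟨0, hn0⟩, fun i _ => hall i⟩
    · push_neg at hall
      obtain ⟨i1, hi1⟩ := hall
      refine ⟨i1, fun i hi => ?_⟩
      by_contra hne
      rw [hamD] at hham
      have huniq := (Set.ncard_le_one (Set.toFinite _)).mp hham
      exact hi (huniq (a := i) (b := i1) hne hi1)
  set Y : ℕ → Fin n → ∀ j, X j :=
    fun m i j => if (j:ℕ) < m then D' (π j i) j else D (π j i) j with hY
  have hY0 : Y 0 = permuteD π D := by
    funext i j; simp [hY, permuteD]
  have hYd : Y d = permuteD π D' := by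
    funext i j; simp [hY, permuteD, j.isLt]
  have hstep : ∀ m, m < d → |dHSICemp k (Y m) - dHSICemp k (Y (m+1))|
      ≤ 2 / (n:ℝ) * Real.sqrt (∏ j, K j) := by
    intro m hm
    refine step_bound hn k K hpsd hbdd hK ⟨m, hm⟩ ((π ⟨m, hm⟩).symm i0) (Y m) (Y (m+1))
      ?_ ?_
    · intro i j hj
      have hjm : (j:ℕ) ≠ m := fun h => hj (Fin.ext h)
      simp only [hY]
      by_cases h : (j:ℕ) < m
      · rw [if_pos h, if_pos (by omega)]
      · rw [if_neg h, if_neg (by omega)]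
    · intro i hi
      have hne : π ⟨m, hm⟩ i ≠ i0 := by
        intro h
        exact hi (by rw [← h, Equiv.symm_apply_apply])
      simp only [hY]
      rw [if_neg (by simp : ¬ (((⟨m, hm⟩ : Fin d) : ℕ) < m)),
        if_pos (by simp : ((⟨m, hm⟩ : Fin d) : ℕ) < m + 1)]
      exact congrFun (hD _ hne) ⟨m, hm⟩
  have htel : ∀ m, m ≤ d → |dHSICemp k (Y 0) - dHSICemp k (Y m)|
      ≤ 2 * (m:ℝ) / (n:ℝ) * Real.sqrt (∏ j, K j) := by
    intro m
    induction m with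
    | zero => intro _; simp
    | succ m ih =>
      intro hm
      have h1 := ih (by omega)
      have h2 := hstep m (by omega)
      calc |dHSICemp k (Y 0) - dHSICemp k (Y (m+1))|
          ≤ |dHSICemp k (Y 0) - dHSICemp k (Y m)|
            + |dHSICemp k (Y m) - dHSICemp k (Y (m+1))| := abs_sub_le _ _ _
        _ ≤ 2 * (m:ℝ) / (n:ℝ) * Real.sqrt (∏ j, K j)
            + 2 / (n:ℝ) * Real.sqrt (∏ j, K j) := add_le_add h1 h2
        _ = 2 * ((m:ℝ)+1) / (n:ℝ) * Real.sqrt (∏ j, K j) := by ring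
        _ = 2 * (((m+1 : ℕ)):ℝ) / (n:ℝ) * Real.sqrt (∏ j, K j) := by push_cast; ring
  have := htel d le_rfl
  rw [hY0, hYd] at this
  exact this

end
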